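/- arXiv:1910.09486 — 2 statements merged into one kernel-verified Lean document; each statement's English description precedes it below -/
import Mathlib

section
/- The function h(r) = tanh(r)/cosh(2r) is strictly decreasing on the interval [0.531, ∞). -/
open Real Set

private lemma exp_lb : (2.892 : ℝ) ≤ Real.exp 1.062 := by
  have h := Real.sum_le_exp_of_nonneg (x := 1.062) (by norm_num) 8
  have h2 : (2.892 : ℝ) ≤ ∑ i ∈ Finset.range 8, (1.062 : ℝ) ^ i / (Nat.factorial i : ℝ) := by
    simp [Finset.sum_range_succ, Nat.factorial]
    norm_num
  linarith

private lemma cosh_lb {y : ℝ} (hy : (1.062 : ℝ) ≤ y) : (1.6188 : ℝ) ≤ Real.cosh y := by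
  have h1 : Real.cosh 1.062 ≤ Real.cosh y := by
    rw [Real.cosh_le_cosh, abs_of_nonneg (by norm_num), abs_of_nonneg (by linarith)]
    exact hy
  have hprod : Real.exp 1.062 * Real.exp (-1.062) = 1 := by
    rw [← Real.exp_add]; norm_num
  have hL := exp_lb
  have hpos : (0 : ℝ) < Real.exp (-1.062) := Real.exp_pos _
  have hkey : (1.6188 : ℝ) ≤ Real.cosh 1.062 := by
    rw [Real.cosh_eq]
    have h3 : (1 : ℝ) - 2.892 * Real.exp (-1.062) ≥ 0 := by nlinarith
    nlinarith [mul_nonneg (sub_nonneg.2 hL) h3]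
  linarith

private lemma hasDerivAt_key {x : ℝ} (hx : (0.531 : ℝ) < x) :
    HasDerivAt (fun r : ℝ => Real.tanh r / Real.cosh (2 * r))
      ((Real.cosh x * (Real.cosh x * Real.cosh (2 * x)) -
        Real.sinh x * (Real.sinh x * Real.cosh (2 * x) +
          Real.cosh x * (Real.sinh (2 * x) * 2))) /
        (Real.cosh x * Real.cosh (2 * x)) ^ 2) x := by
  have heq : (fun r : ℝ => Real.tanh r / Real.cosh (2 * r)) =
      fun r : ℝ => Real.sinh r / (Real.cosh r * Real.cosh (2 * r)) := by
    funext r; rw [Real.tanh_eq_sinh_div_cosh, div_div]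
  rw [heq]
  have h2r : HasDerivAt (fun r : ℝ => Real.cosh (2 * r)) (Real.sinh (2 * x) * 2) x := by
    have hlin : HasDerivAt (fun r : ℝ => 2 * r) 2 x := by
      simpa using (hasDerivAt_id x).const_mul 2
    have := (Real.hasDerivAt_cosh (2 * x)).comp x hlin
    exact this
  have hden : HasDerivAt (fun r : ℝ => Real.cosh r * Real.cosh (2 * r))
      (Real.sinh x * Real.cosh (2 * x) + Real.cosh x * (Real.sinh (2 * x) * 2)) x :=
    (Real.hasDerivAt_cosh x).mul h2r
  exact (Real.hasDerivAt_sinh x).div hden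
    (by positivity)

theorem tanh_div_cosh_strictAntiOn :
    StrictAntiOn (fun r : ℝ => Real.tanh r / Real.cosh (2 * r)) (Set.Ici (0.531 : ℝ)) := by
  apply strictAntiOn_of_deriv_neg (convex_Ici _)
  · have heq : (fun r : ℝ => Real.tanh r / Real.cosh (2 * r)) =
        fun r : ℝ => Real.sinh r / (Real.cosh r * Real.cosh (2 * r)) := by
      funext r; rw [Real.tanh_eq_sinh_div_cosh, div_div]
    rw [heq]
    apply Continuous.continuousOn
    exact Real.continuous_sinh.div (by fun_prop) fun x => by positivity
  · intro x hx
    rw [interior_Ici, mem_Ioi] at hx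
    rw [(hasDerivAt_key hx).deriv]
    apply div_neg_of_neg_of_pos
    · have hC : (1.6188 : ℝ) ≤ Real.cosh (2 * x) := cosh_lb (by linarith)
      have h1 : Real.cosh x ^ 2 - Real.sinh x ^ 2 = 1 := Real.cosh_sq_sub_sinh_sq x
      have h2 : Real.cosh (2 * x) ^ 2 - Real.sinh (2 * x) ^ 2 = 1 :=
        Real.cosh_sq_sub_sinh_sq (2 * x)
      have h3 : Real.sinh (2 * x) = 2 * Real.sinh x * Real.cosh x := Real.sinh_two_mul x
      rw [h3] at h2 ⊢
      nlinarith [Real.cosh_pos x, Real.cosh_pos (2 * x)]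
    · positivity
end

section
/- Let F be a free group, x ∈ F nontrivial, y ∈ F, and m, n nonzero integers. If y·xᵐ·y⁻¹ = xⁿ, then m = n and y commutes with x. -/
open FreeGroup Subgroup


section helpers

lemma aux_pow_subsingleton {β : Type*} [Subsingleton β] (s : β) (x : FreeGroup β) :
    ∃ k : ℤ, x = of s ^ k := by
  induction x using FreeGroup.induction_on with
  | C1 => exact ⟨0, by simp⟩
  | of a => exact ⟨1, by rw [Subsingleton.elim a s, zpow_one]⟩
  | inv_of a ih => exact ⟨-1, by rw [Subsingleton.elim a s, zpow_neg, zpow_one]⟩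
  | mul a b iha ihb =>
      obtain ⟨k, hk⟩ := iha; obtain ⟨l, hl⟩ := ihb
      exact ⟨k + l, by rw [hk, hl, zpow_add]⟩

lemma aux_of_zpow_eq_one {β : Type*} (s : β) {k : ℤ} (h : (of s : FreeGroup β) ^ k = 1) :
    k = 0 := by
  have h1 := congrArg (FreeGroup.lift (fun _ : β => Multiplicative.ofAdd (1 : ℤ))) h
  simp only [map_zpow, FreeGroup.lift_apply_of, MonoidHom.map_one] at h1
  have h2 : (k : ℤ) • (1 : ℤ) = 0 := by
    have := congrArg Multiplicative.toAdd h1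
    simpa [toAdd_zpow] using this
  simpa using h2

lemma aux_all_one {β : Type*} [IsEmpty β] (x : FreeGroup β) : x = 1 := by
  induction x using FreeGroup.induction_on with
  | C1 => rfl
  | of a => exact isEmptyElim a
  | inv_of a ih => exact isEmptyElim a
  | mul a b iha ihb => rw [iha, ihb, one_mul]

lemma aux_comm_subsingleton {β : Type*} [Subsingleton β] (u v : FreeGroup β) :
    u * v = v * u := by
  rcases isEmpty_or_nonempty β with hβ | ⟨⟨s⟩⟩
  · rw [aux_all_one u, aux_all_one v]
  · obtain ⟨k, hk⟩ := aux_pow_subsingleton s u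
    obtain ⟨l, hl⟩ := aux_pow_subsingleton s v
    rw [hk, hl, ← zpow_add, ← zpow_add, add_comm]

lemma aux_noncomm {β : Type*} {s t : β} (hst : s ≠ t) :
    (of s : FreeGroup β) * of t ≠ of t * of s := by
  classical
  intro hc
  have hd : (of true : FreeGroup Bool) * of false ≠ of false * of true := by decide
  apply hd
  have := congrArg (FreeGroup.lift
    (fun a : β => if a = s then (of true : FreeGroup Bool)
      else if a = t then of false else 1)) hc
  simpa [FreeGroup.lift_apply_of, hst, Ne.symm hst] using this

/-- An abelian free group is trivial or infinite cyclic. -/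
lemma aux_cyclic {G : Type*} [Group G] [IsFreeGroup G] (hcomm : ∀ u v : G, u * v = v * u) :
    (∀ z : G, z = 1) ∨
      ∃ g : G, (∀ z : G, ∃ k : ℤ, z = g ^ k) ∧ ∀ j : ℤ, g ^ j = 1 → j = 0 := by
  set S := IsFreeGroup.Generators G
  let e : FreeGroup S ≃* G := IsFreeGroup.mulEquiv G
  have hsub : Subsingleton S := by
    constructor
    intro s t
    by_contra hst
    apply aux_noncomm hst
    apply e.injective
    rw [_root_.map_mul, _root_.map_mul]
    exact hcomm _ _
  rcases isEmpty_or_nonempty S with hS | ⟨⟨s⟩⟩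
  · left
    intro z
    have : e.symm z = 1 := aux_all_one _
    have := congrArg e this
    simpa using this
  · right
    refine ⟨e (of s), fun z => ?_, fun j hj => ?_⟩
    · obtain ⟨k, hk⟩ := aux_pow_subsingleton s (e.symm z)
      exact ⟨k, by have := congrArg e hk; simpa [map_zpow] using this⟩
    · apply aux_of_zpow_eq_one s (k := j)
      apply e.injective
      rw [map_zpow]
      simpa using hj

/-- Free groups are torsion-free. -/
lemma aux_tf {α : Type*} (x : FreeGroup α) (k : ℤ) (hk : k ≠ 0) (h : x ^ k = 1) : x = 1 := by
  set H := Subgroup.zpowers x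
  have hcomm : ∀ u v : H, u * v = v * u := by
    rintro ⟨u, hu⟩ ⟨v, hv⟩
    obtain ⟨i, rfl⟩ := Subgroup.mem_zpowers_iff.mp hu
    obtain ⟨j, rfl⟩ := Subgroup.mem_zpowers_iff.mp hv
    exact Subtype.ext (((Commute.refl x).zpow_zpow i j))
  have hX : x ∈ H := Subgroup.mem_zpowers x
  have hXk : (⟨x, hX⟩ : H) ^ k = 1 := by
    ext
    simpa [SubgroupClass.coe_zpow] using h
  rcases aux_cyclic hcomm with h1 | ⟨g, hpow, htf⟩
  · have := h1 ⟨x, hX⟩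
    simpa [Subtype.ext_iff] using this
  · obtain ⟨a, ha⟩ := hpow ⟨x, hX⟩
    have : g ^ (a * k) = 1 := by rw [zpow_mul, ← ha, hXk]
    have hak := htf _ this
    have ha0 : a = 0 := by
      rcases mul_eq_zero.mp hak with h' | h'
      · exact h'
      · exact absurd h' hk
    rw [ha0, zpow_zero] at ha
    simpa [Subtype.ext_iff] using ha

end helpers

lemma aux_finsupp {S : Type*} (u v : S →₀ ℤ) (m p : ℤ) (hm : m ≠ 0)
    (hdep : m • u = p • v) {s t : S}
    (hs : ∃ a b : ℤ, a • u + b • v = Finsupp.single s 1)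
    (ht : ∃ a b : ℤ, a • u + b • v = Finsupp.single t 1) : s = t := by
  by_contra hst
  obtain ⟨a1, b1, h1⟩ := hs
  obtain ⟨a2, b2, h2⟩ := ht
  have key : ∀ (a b : ℤ) (w : S →₀ ℤ), a • u + b • v = w →
      (a * p + m * b) • v = m • w := by
    intro a b w hw
    rw [← hw, smul_add, add_smul, mul_smul, mul_smul, ← hdep, smul_comm a m u,
      smul_comm m b v]
  have k1 := key a1 b1 _ h1
  have k2 := key a2 b2 _ h2
  set c1 := a1 * p + m * b1
  set c2 := a2 * p + m * b2
  have e1s : c1 * v s = m := by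
    have := DFunLike.congr_fun k1 s
    simpa [Finsupp.single_apply] using this
  have e2s : c2 * v s = 0 := by
    have := DFunLike.congr_fun k2 s
    simpa [Finsupp.single_apply, Ne.symm hst] using this
  have e2t : c2 * v t = m := by
    have := DFunLike.congr_fun k2 t
    simpa [Finsupp.single_apply] using this
  have hvs : v s ≠ 0 := by
    intro h0
    rw [h0, mul_zero] at e1s
    exact hm e1s.symm
  have hc2 : c2 = 0 := by
    rcases mul_eq_zero.mp e2s with h' | h'
    · exact h'
    · exact absurd h' hvs
  rw [hc2, zero_mul] at e2t
  exact hm e2t.symm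

lemma aux_W {G : Type u} [Group G] [IsFreeGroup G] {a b : G}
    (htop : Subgroup.closure ({a, b} : Set G) = ⊤) {m p : ℤ} (hm : m ≠ 0)
    (hrel : Abelianization.of a ^ m = Abelianization.of b ^ p)
    (u v : G) : u * v = v * u := by
  set S := IsFreeGroup.Generators G
  let e : FreeGroup S ≃* G := IsFreeGroup.mulEquiv G
  let π : FreeGroup S →* Multiplicative (S →₀ ℤ) :=
    FreeGroup.lift (fun s => Multiplicative.ofAdd (Finsupp.single s 1))
  let f : G →* Multiplicative (S →₀ ℤ) := π.comp e.symm.toMonoidHom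
  have hrelf : f a ^ m = f b ^ p := by
    have := congrArg (Abelianization.lift f) hrel
    simpa [map_zpow, Abelianization.lift_apply_of] using this
  have hdep : m • (f a).toAdd = p • (f b).toAdd := by
    have := hrelf
    have := congrArg Multiplicative.toAdd this
    simpa [toAdd_zpow] using this
  have hsub : Subsingleton S := by
    constructor
    intro s t
    have hmem : ∀ r : S, ∃ α β : ℤ,
        α • (f a).toAdd + β • (f b).toAdd = Finsupp.single r 1 := by
      intro r
      have h1 : e (of r) ∈ Subgroup.closure ({a, b} : Set G) := by
        rw [htop]; exact Subgroup.mem_top _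
      have h2 : f (e (of r)) ∈ Subgroup.map f (Subgroup.closure ({a, b} : Set G)) :=
        Subgroup.mem_map_of_mem f h1
      rw [MonoidHom.map_closure, Set.image_pair] at h2
      obtain ⟨α, β, hab⟩ := Subgroup.mem_closure_pair.mp h2
      refine ⟨α, β, ?_⟩
      have hfe : f (e (of r)) = Multiplicative.ofAdd (Finsupp.single r 1) := by
        show π (e.symm (e (of r))) = _
        rw [MulEquiv.symm_apply_apply]
        exact FreeGroup.lift_apply_of
      rw [hfe] at hab
      have := congrArg Multiplicative.toAdd hab
      simpa [toAdd_zpow] using this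
    exact aux_finsupp _ _ m p hm hdep (hmem s) (hmem t)
  apply e.symm.injective
  rw [_root_.map_mul, _root_.map_mul]
  exact aux_comm_subsingleton _ _
lemma aux_closure_pair_top {G : Type*} [Group G] (a b : G)
    (ha : a ∈ Subgroup.closure ({a, b} : Set G)) (hb : b ∈ Subgroup.closure ({a, b} : Set G)) :
    Subgroup.closure ({⟨a, ha⟩, ⟨b, hb⟩} :
      Set (Subgroup.closure ({a, b} : Set G))) = ⊤ := by
  have := Subgroup.closure_closure_coe_preimage (k := ({a, b} : Set G))
  convert this using 2
  ext z
  simp only [Set.mem_insert_iff, Set.mem_singleton_iff, Set.mem_preimage, Subtype.ext_iff]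

lemma aux_closure_comm {G : Type*} [Group G] {a b : G} (hab : a * b = b * a)
    (u v : Subgroup.closure ({a, b} : Set G)) : u * v = v * u := by
  have hle : Subgroup.closure ({a, b} : Set G) ≤ Subgroup.centralizer ({a, b} : Set G) := by
    rw [Subgroup.closure_le]
    intro g hg
    rcases hg with rfl | rfl
    · rw [SetLike.mem_coe, Subgroup.mem_centralizer_iff]
      rintro h (rfl | rfl)
      · rfl
      · exact hab.symm
    · rw [SetLike.mem_coe, Subgroup.mem_centralizer_iff]
      rintro h (rfl | rfl)
      · exact hab
      · rfl
  obtain ⟨u, hu⟩ := u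
  obtain ⟨v, hv⟩ := v
  have hu' := hle hu
  rw [Subgroup.mem_centralizer_iff] at hu'
  have hvle : Subgroup.closure ({a, b} : Set G) ≤ Subgroup.centralizer {u} := by
    rw [Subgroup.closure_le]
    intro g hg
    rw [SetLike.mem_coe, Subgroup.mem_centralizer_iff]
    rintro h rfl
    exact (hu' g hg).symm
  have := hvle hv
  rw [Subgroup.mem_centralizer_iff] at this
  exact Subtype.ext (this u rfl)
theorem freeGroup_conj_zpow_eq {α : Type*} (x y : FreeGroup α) (m n : ℤ)
    (hx : x ≠ 1) (hm : m ≠ 0) (hn : n ≠ 0)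
    (h : y * x ^ m * y⁻¹ = x ^ n) : m = n ∧ Commute y x := by
  have hmn : m = n := by
    by_contra hmn
    have hxH : x ∈ Subgroup.closure ({x, y} : Set (FreeGroup α)) :=
      Subgroup.subset_closure (Set.mem_insert _ _)
    have hyH : y ∈ Subgroup.closure ({x, y} : Set (FreeGroup α)) :=
      Subgroup.subset_closure (Set.mem_insert_of_mem _ rfl)
    set X : Subgroup.closure ({x, y} : Set (FreeGroup α)) := ⟨x, hxH⟩
    set Y : Subgroup.closure ({x, y} : Set (FreeGroup α)) := ⟨y, hyH⟩
    have hrelH : Y * X ^ m * Y⁻¹ = X ^ n := by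
      ext
      simpa [SubgroupClass.coe_zpow] using h
    have hrelAb : Abelianization.of X ^ (m - n) = Abelianization.of Y ^ (0 : ℤ) := by
      set f := Abelianization.of (G := Subgroup.closure ({x, y} : Set (FreeGroup α)))
      have hthis := congrArg f hrelH
      simp only [_root_.map_mul, map_zpow, map_inv] at hthis
      have h2 : f X ^ m = f X ^ n := by
        calc f X ^ m = f Y * f X ^ m * (f Y)⁻¹ := by
              rw [mul_comm (f Y) (f X ^ m), mul_assoc, mul_inv_cancel, mul_one]
          _ = f X ^ n := hthis
      rw [zpow_sub, h2, mul_inv_cancel, zpow_zero]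
    have habel := aux_W (a := X) (b := Y) (aux_closure_pair_top x y hxH hyH)
      (m := m - n) (p := 0) (by omega) hrelAb
    have hxy : x * y = y * x := by
      have := habel X Y
      simpa [Subtype.ext_iff] using this
    have hc : Commute y x := hxy.symm
    have hx2 : x ^ n = x ^ m := by
      rw [← h, (hc.zpow_right m).eq, mul_assoc, mul_inv_cancel, mul_one]
    have : x ^ (n - m) = 1 := by rw [zpow_sub, hx2, mul_inv_cancel]
    exact hx (aux_tf x (n - m) (by omega) this)
  refine ⟨hmn, ?_⟩
  subst hmn
  have hcm : x ^ m * y = y * x ^ m := by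
    conv_lhs => rw [← h]
    rw [inv_mul_cancel_right]
  have hxK : x ^ m ∈ Subgroup.closure ({x ^ m, y} : Set (FreeGroup α)) :=
    Subgroup.subset_closure (Set.mem_insert _ _)
  have hyK : y ∈ Subgroup.closure ({x ^ m, y} : Set (FreeGroup α)) :=
    Subgroup.subset_closure (Set.mem_insert_of_mem _ rfl)
  rcases aux_cyclic (aux_closure_comm (a := x ^ m) (b := y) hcm) with h1 | ⟨g, hpow, _⟩
  · have := h1 ⟨x ^ m, hxK⟩
    rw [Subtype.ext_iff] at this
    exact absurd (aux_tf x m hm this) hx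
  · obtain ⟨p, hp⟩ := hpow ⟨x ^ m, hxK⟩
    obtain ⟨q, hq⟩ := hpow ⟨y, hyK⟩
    rw [Subtype.ext_iff, SubgroupClass.coe_zpow] at hp hq
    set z := (g : FreeGroup α) with hz
    have hp' : x ^ m = z ^ p := hp
    have hq' : y = z ^ q := hq
    have hxK' : x ∈ Subgroup.closure ({x, z} : Set (FreeGroup α)) :=
      Subgroup.subset_closure (Set.mem_insert _ _)
    have hzK' : z ∈ Subgroup.closure ({x, z} : Set (FreeGroup α)) :=
      Subgroup.subset_closure (Set.mem_insert_of_mem _ rfl)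
    have hrelAb' : Abelianization.of (⟨x, hxK'⟩ : Subgroup.closure ({x, z} : Set (FreeGroup α))) ^ m
        = Abelianization.of (⟨z, hzK'⟩ : Subgroup.closure ({x, z} : Set (FreeGroup α))) ^ p := by
      rw [← map_zpow, ← map_zpow]
      congr 1
      ext
      simpa [SubgroupClass.coe_zpow] using hp'
    have habel' := aux_W (a := (⟨x, hxK'⟩ : Subgroup.closure ({x, z} : Set (FreeGroup α))))
      (b := ⟨z, hzK'⟩) (aux_closure_pair_top x z hxK' hzK') (m := m) (p := p) hm hrelAb'
    have hxz : x * z = z * x := by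
      have := habel' ⟨x, hxK'⟩ ⟨z, hzK'⟩
      simpa [Subtype.ext_iff] using this
    have hc : Commute x z := hxz
    have hcq : Commute (z ^ q) x := (hc.zpow_right q).symm
    rwa [← hq'] at hcq
end
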